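/- For every k ∈ X with ‖k‖ ≤ 1, it holds that φ⁻(x⁻_α + k − y⁻_α) ≥ (tρ/25)·(1/16 + v*(k)/ρ) − |e*(k + (ρ/4)v)| − |h*(k + (ρ/4)v)|. -/
import Mathlib


set_option maxHeartbeats 1000000
open Filter Topology Set

theorem statement7 {X : Type*} [NormedAddCommGroup X] [NormedSpace ℝ X] [CompleteSpace X]
    (ρ t : ℝ) (hρ0 : 0 < ρ) (hρ1 : ρ < 1 / 4) (ht0 : 0 < t) (ht1 : t < ρ / 16)
    (v e h : X) (hv : ‖v‖ = 1) (he : ‖e‖ = 1) (hh : ‖h‖ = 1)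
    (vs es hs : X →L[ℝ] ℝ) (hvs : ‖vs‖ = 1) (hes : ‖es‖ = 1) (hhs : ‖hs‖ = 1)
    (hvv : vs v = 1) (hee : es e = 1) (hhh : hs h = 1) (heh : |es h| < ρ / 800)
    (xp xm yp ym : X)
    (hxp : xp = (1 - ρ / 2) • e + t • h) (hxm : xm = (1 - ρ / 2) • e - t • h)
    (hyp : yp = xp + (ρ / 4) • v) (hym : ym = xm - (ρ / 4) • v)
    (lam : ℝ) (hlam : lam = 1 - ρ / 100)
    (phip phim : X →L[ℝ] ℝ)
    (hphip : phip = lam • es + (1 - lam) • (hs - (4 * t / ρ) • vs))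
    (hphim : phim = lam • es + (1 - lam) • (-hs + (4 * t / ρ) • vs))
    (k : X) (hk : ‖k‖ ≤ 1) :
    phim (xm + k - ym) ≥
      t * ρ / 25 * (1 / 16 + vs k / ρ) - |es (k + (ρ / 4) • v)| - |hs (k + (ρ / 4) • v)| := by
  have hw : xm + k - ym = k + (ρ / 4) • v := by rw [hym]; abel
  rw [hw, hphim]
  have hV : vs (k + (ρ / 4) • v) = vs k + ρ / 4 := by
    simp [map_add, hvv]
  set A := es (k + (ρ / 4) • v) with hA
  set H := hs (k + (ρ / 4) • v) with hH
  set V := vs k with hVk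
  simp only [ContinuousLinearMap.add_apply, ContinuousLinearMap.smul_apply,
    ContinuousLinearMap.neg_apply, hV, smul_eq_mul, ← hA, ← hH]
  have hρ : ρ ≠ 0 := ne_of_gt hρ0
  rw [hlam]
  have key1 : (1 - (1 - ρ / 100)) * (-H + 4 * t / ρ * (V + ρ / 4)) =
      -(ρ / 100) * H + t / 25 * V + t * ρ / 100 := by field_simp; ring
  have key2 : t * ρ / 25 * (1 / 16 + V / ρ) = t * ρ / 400 + t / 25 * V := by
    field_simp; ring
  rw [key1, key2]
  have c1 : (0:ℝ) ≤ (1 - ρ / 100) * (A + |A|) :=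
    mul_nonneg (by linarith) (by linarith [neg_abs_le A])
  have c2 : (0:ℝ) ≤ (ρ / 100) * (|H| - H) :=
    mul_nonneg (by linarith) (by linarith [le_abs_self H])
  nlinarith [mul_pos ht0 hρ0, abs_nonneg A, abs_nonneg H]
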